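/- arXiv:0709.3535 — 7 statements merged into one kernel-verified Lean document; each statement's English description precedes it below -/
import Mathlib

section
/- Let M be a 4×4 real matrix with all entries strictly positive, whose row sums R1, R2, R3, R4 satisfy R1 ≥ R2 ≥ R3 > R4 > 0, and set δ = R3/R4 − 1 > 0. For any ε with 0 < ε < min(1/4, δ/2), let M' be the matrix obtained from M by multiplying every entry of the fourth row by (1+ε). Then L(M') > L(M). -/
open Finset

/-- The likelihood of the 100 Swiss Francs data table: diagonal counts 4,
off-diagonal counts 2. -/
noncomputable def swissL (M : Matrix (Fin 4) (Fin 4) ℝ) : ℝ :=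
  (∏ i : Fin 4, ∏ j : Fin 4, M i j ^ (if i = j then 4 else 2)) /
    (∑ i : Fin 4, ∑ j : Fin 4, M i j) ^ 40

set_option maxHeartbeats 1000000 in
lemma swiss_key_ineq (S b δ ε : ℝ) (hb : 0 < b) (hδ : 0 < δ) (hε0 : 0 < ε)
    (hε14 : ε < 1/4) (hεδ : ε < δ/2) (hSge : (4 + 3*δ) * b ≤ S) :
    (S + ε * b)^4 < (1 + ε) * S^4 := by
  have hSpos : 0 < S := lt_of_lt_of_le (by nlinarith) hSge
  have hb4 : b ≤ S / 4 := by nlinarith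
  have h1 : 4*S^3*b + 3*δ*S^3*b ≤ S^4 := by
    nlinarith [mul_le_mul_of_nonneg_right hSge (pow_nonneg hSpos.le 3)]
  have h1' : 4*ε*S^3*b + 3*δ*ε*S^3*b ≤ ε*S^4 := by
    nlinarith [mul_le_mul_of_nonneg_left h1 hε0.le]
  have hA : 6*ε^2*S^2*b^2 ≤ (3/2)*ε^2*S^3*b := by
    nlinarith [mul_le_mul_of_nonneg_left hb4 (show (0:ℝ) ≤ 6*ε^2*S^2*b by positivity)]
  have hb2 : b^2 ≤ S^2/16 := by nlinarith
  have hb3 : b^3 ≤ S^3/64 := by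
    nlinarith [sq_nonneg b, mul_le_mul hb2 hb4 hb.le (by positivity), pow_nonneg hb.le 2]
  have hB : 4*ε^3*S*b^3 ≤ ε^2*S^3*b/16 := by
    nlinarith [mul_le_mul_of_nonneg_right (show 4*ε^3 ≤ ε^2 by nlinarith)
        (show (0:ℝ) ≤ S*b^3 by positivity),
      mul_le_mul_of_nonneg_left hb2 (show (0:ℝ) ≤ ε^2*S*b by positivity)]
  have hC : ε^4*b^4 ≤ ε^2*S^3*b/1024 := by
    nlinarith [mul_le_mul_of_nonneg_left hb3 (show (0:ℝ) ≤ ε^2*ε^2*b by positivity),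
      mul_le_mul_of_nonneg_right (show ε^2 ≤ 1/16 by nlinarith)
        (show (0:ℝ) ≤ b*S^3/64 by positivity),
      mul_le_mul_of_nonneg_right (show ε^2 ≤ 1/16 by nlinarith)
        (show (0:ℝ) ≤ ε^2*b*b^3 by positivity)]
  have hD : 2*ε^2*S^3*b ≤ δ*ε*S^3*b := by
    nlinarith [mul_le_mul_of_nonneg_right (show 2*ε ≤ δ by linarith)
      (show (0:ℝ) ≤ ε*S^3*b by positivity)]
  have expand : (S + ε*b)^4
      = S^4 + 4*ε*S^3*b + 6*ε^2*S^2*b^2 + 4*ε^3*S*b^3 + ε^4*b^4 := by ring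
  rw [expand]
  have hP1 : (0:ℝ) < ε^2*S^3*b := by positivity
  have hP2 : (0:ℝ) < δ*ε*S^3*b := by positivity
  linarith [h1', hA, hB, hC, hD, hP1, hP2]

theorem scaling_last_row_increases_likelihood
    (M : Matrix (Fin 4) (Fin 4) ℝ) (hpos : ∀ i j, 0 < M i j)
    (R : Fin 4 → ℝ) (hR : ∀ i, R i = ∑ j, M i j)
    (h12 : R 1 ≤ R 0) (h23 : R 2 ≤ R 1) (h34 : R 3 < R 2) (h4 : 0 < R 3)
    (δ : ℝ) (hδ : δ = R 2 / R 3 - 1)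
    (ε : ℝ) (hε0 : 0 < ε) (hε : ε < min (1/4) (δ/2))
    (M' : Matrix (Fin 4) (Fin 4) ℝ)
    (hM' : ∀ i j, M' i j = if i = 3 then (1 + ε) * M i j else M i j) :
    swissL M < swissL M' := by
  have hε14 : ε < 1/4 := lt_of_lt_of_le hε (min_le_left _ _)
  have hεδ : ε < δ/2 := lt_of_lt_of_le hε (min_le_right _ _)
  have hR2 : R 2 = (1 + δ) * R 3 := by
    field_simp [ne_of_gt h4] at hδ
    linarith
  have hδpos : 0 < δ := by nlinarith
  have hRS : (∑ i : Fin 4, ∑ j : Fin 4, M i j) = R 0 + R 1 + R 2 + R 3 := by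
    simp [Fin.sum_univ_four, hR]
  set S : ℝ := ∑ i : Fin 4, ∑ j : Fin 4, M i j with hSdef
  have hSge : (4 + 3*δ) * R 3 ≤ S := by rw [hRS]; nlinarith
  have hSpos : 0 < S := by rw [hRS]; nlinarith
  have hS'pos : 0 < S + ε * R 3 := by positivity
  have key : (S + ε * R 3)^4 < (1 + ε) * S^4 :=
    swiss_key_ineq S (R 3) δ ε h4 hδpos hε0 hε14 hεδ hSge
  set P : ℝ := ∏ i : Fin 4, ∏ j : Fin 4, M i j ^ (if i = j then 4 else 2) with hPdef
  have hPpos : 0 < P :=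
    prod_pos fun i _ => prod_pos fun j _ => pow_pos (hpos i j) _
  have hnum : (∏ i : Fin 4, ∏ j : Fin 4, M' i j ^ (if i = j then 4 else 2))
      = (1+ε)^10 * P := by
    rw [hPdef]
    simp only [hM', Fin.prod_univ_four,
      show ((0:Fin 4) = 3) = False by simp, show ((1:Fin 4) = 3) = False by simp,
      show ((2:Fin 4) = 3) = False by simp, show ((3:Fin 4) = 3) = True by simp,
      show ((0:Fin 4) = 0) = True by simp, show ((0:Fin 4) = 1) = False by simp,
      show ((0:Fin 4) = 2) = False by simp,
      show ((1:Fin 4) = 0) = False by simp, show ((1:Fin 4) = 1) = True by simp,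
      show ((1:Fin 4) = 2) = False by simp,
      show ((2:Fin 4) = 0) = False by simp, show ((2:Fin 4) = 1) = False by simp,
      show ((2:Fin 4) = 2) = True by simp,
      show ((3:Fin 4) = 0) = False by simp, show ((3:Fin 4) = 1) = False by simp,
      show ((3:Fin 4) = 2) = False by simp,
      if_true, if_false]
    ring
  have hden : (∑ i : Fin 4, ∑ j : Fin 4, M' i j) = S + ε * R 3 := by
    rw [hSdef, hR]
    simp only [hM', Fin.sum_univ_four,
      show ((0:Fin 4) = 3) = False by simp, show ((1:Fin 4) = 3) = False by simp,
      show ((2:Fin 4) = 3) = False by simp, show ((3:Fin 4) = 3) = True by simp,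
      if_true, if_false]
    ring
  have hLM : swissL M = P / S ^ 40 := rfl
  have hLM' : swissL M' = ((1+ε)^10 * P) / (S + ε * R 3) ^ 40 := by
    rw [swissL, hnum, hden]
  rw [hLM, hLM', div_lt_div_iff₀ (by positivity) (by positivity)]
  have h40 : (S + ε * R 3)^40 < (1+ε)^10 * S^40 := by
    have h10 := pow_lt_pow_left₀ key (by positivity) (n := 10) (by norm_num)
    calc (S + ε * R 3)^40 = ((S + ε * R 3)^4)^10 := by ring
      _ < ((1+ε)*S^4)^10 := h10
      _ = (1+ε)^10 * S^40 := by ring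
  exact ((mul_lt_mul_iff_right₀ hPpos).mpr h40).trans_eq (by ring)
end

section
/- Let M be a 4×4 real matrix with nonnegative entries, of rank at most 2, with ∑_{i,j} M_{ij} > 0, such that L(M) ≥ L(N) for every 4×4 real matrix N with nonnegative entries and rank at most 2. Then all four row sums of M are equal and all four column sums of M are equal. -/
open Finset

open Matrix in
lemma swissL_transpose (M : Matrix (Fin 4) (Fin 4) ℝ) : swissL Mᵀ = swissL M := by
  have hnum : (∏ i : Fin 4, ∏ j : Fin 4, Mᵀ i j ^ (if i = j then 4 else 2)) =
      ∏ i : Fin 4, ∏ j : Fin 4, M i j ^ (if i = j then 4 else 2) := by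
    rw [Finset.prod_comm]
    refine Finset.prod_congr rfl fun j _ => Finset.prod_congr rfl fun i _ => ?_
    simp [Matrix.transpose_apply, eq_comm]
  have hden : (∑ i : Fin 4, ∑ j : Fin 4, Mᵀ i j) = ∑ i : Fin 4, ∑ j : Fin 4, M i j := by
    exact Finset.sum_comm
  unfold swissL
  rw [hnum, hden]

lemma row_exp_sum (k : Fin 4) : ∑ j, (if k = j then 4 else 2) = 10 := by
  fin_cases k <;> simp [Fin.sum_univ_four]

lemma swissL_row_scale (M : Matrix (Fin 4) (Fin 4) ℝ) (d : Fin 4 → ℝ) :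
    swissL (Matrix.diagonal d * M) =
      (∏ k, d k) ^ 10 * (∏ i : Fin 4, ∏ j : Fin 4, M i j ^ (if i = j then 4 else 2)) /
        (∑ k, d k * ∑ j, M k j) ^ 40 := by
  unfold swissL
  congr 1
  · rw [← Finset.prod_pow]
    rw [← Finset.prod_mul_distrib]
    refine Finset.prod_congr rfl fun k _ => ?_
    have h1 : ∀ j, (Matrix.diagonal d * M) k j = d k * M k j := fun j => by
      simp [Matrix.diagonal_mul]
    calc (∏ j, (Matrix.diagonal d * M) k j ^ (if k = j then 4 else 2))
        = ∏ j, (d k ^ (if k = j then 4 else 2) * M k j ^ (if k = j then 4 else 2)) := by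
          refine Finset.prod_congr rfl fun j _ => ?_
          rw [h1 j, mul_pow]
      _ = (∏ j, d k ^ (if k = j then 4 else 2)) * ∏ j, M k j ^ (if k = j then 4 else 2) :=
          Finset.prod_mul_distrib
      _ = d k ^ 10 * ∏ j, M k j ^ (if k = j then 4 else 2) := by
          rw [Finset.prod_pow_eq_pow_sum, row_exp_sum]
  · congr 1
    refine Finset.sum_congr rfl fun k _ => ?_
    rw [Finset.mul_sum]
    refine Finset.sum_congr rfl fun j _ => ?_
    simp [Matrix.diagonal_mul]

lemma rank_scale_le (M : Matrix (Fin 4) (Fin 4) ℝ) (d : Fin 4 → ℝ) (h : M.rank ≤ 2) :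
    (Matrix.diagonal d * M).rank ≤ 2 :=
  le_trans (Matrix.rank_mul_le_right _ _) h

/-- Key lemma: at a maximizer with positive entries, all row sums are equal. -/
lemma rows_eq (M : Matrix (Fin 4) (Fin 4) ℝ)
    (hpos : ∀ i j, 0 < M i j)
    (hrank : M.rank ≤ 2)
    (hLpos : 0 < swissL M)
    (hmax : ∀ N : Matrix (Fin 4) (Fin 4) ℝ,
      (∀ i j, 0 ≤ N i j) → N.rank ≤ 2 → swissL N ≤ swissL M)
    (i i' : Fin 4) : ∑ j, M i j = ∑ j, M i' j := by
  by_contra hne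
  have hii' : i ≠ i' := by rintro rfl; exact hne rfl
  set a : ℝ := ∑ j, M i j with ha
  set b : ℝ := ∑ j, M i' j with hb
  have hapos : 0 < a := Finset.sum_pos (fun j _ => hpos i j) ⟨0, Finset.mem_univ 0⟩
  have hbpos : 0 < b := Finset.sum_pos (fun j _ => hpos i' j) ⟨0, Finset.mem_univ 0⟩
  set d : Fin 4 → ℝ := fun k =>
    if k = i then (a + b) / (2 * a) else if k = i' then (a + b) / (2 * b) else 1 with hd
  have hdpos : ∀ k, 0 < d k := by
    intro k
    simp only [hd]
    split
    · positivity
    · split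
      · positivity
      · norm_num
  set N := Matrix.diagonal d * M with hN
  have hNnn : ∀ k j, 0 ≤ N k j := by
    intro k j
    have : N k j = d k * M k j := by simp [hN, Matrix.diagonal_mul]
    rw [this]
    exact le_of_lt (mul_pos (hdpos k) (hpos k j))
  have hNrank : N.rank ≤ 2 := rank_scale_le M d hrank
  -- the weighted row-sum is unchanged
  have hsum : (∑ k, d k * ∑ j, M k j) = ∑ k, ∑ j, M k j := by
    have hterm : ∀ k, d k * (∑ j, M k j) =
        (∑ j, M k j) + ((if k = i then (b - a) / 2 else 0) +
          (if k = i' then (a - b) / 2 else 0)) := by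
      intro k
      rcases eq_or_ne k i with rfl | hki
      · simp only [hd, if_pos rfl, if_neg hii', ← ha, eq_self_iff_true, if_true, ↓reduceIte]
        field_simp
        ring
      · rcases eq_or_ne k i' with rfl | hki'
        · simp only [hd, if_neg hki, if_pos rfl, ← hb, eq_self_iff_true, if_true, ↓reduceIte]
          field_simp
          ring
        · simp [hd, hki, hki']
    calc (∑ k, d k * ∑ j, M k j)
        = ∑ k, ((∑ j, M k j) + ((if k = i then (b - a) / 2 else 0) +
            (if k = i' then (a - b) / 2 else 0))) := Finset.sum_congr rfl fun k _ => hterm k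
      _ = ∑ k, ∑ j, M k j := by
          simp only [Finset.sum_add_distrib, Finset.sum_ite_eq', Finset.mem_univ, if_pos]
          ring
  -- the product of the scalings
  have hprod : (∏ k, d k) = (a + b) / (2 * a) * ((a + b) / (2 * b)) := by
    have hdk : ∀ k, d k = (if k = i then (a + b) / (2 * a) else 1) *
        (if k = i' then (a + b) / (2 * b) else 1) := by
      intro k
      rcases eq_or_ne k i with rfl | hki
      · simp [hd, hii']
      · rcases eq_or_ne k i' with rfl | hki'
        · simp [hd, hki]
        · simp [hd, hki, hki']
    rw [Finset.prod_congr rfl fun k _ => hdk k, Finset.prod_mul_distrib]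
    simp [Finset.prod_ite_eq']
  have hP1 : 1 < (∏ k, d k) := by
    rw [hprod, div_mul_div_comm, lt_div_iff₀ (by positivity)]
    have h0 : a - b ≠ 0 := sub_ne_zero.mpr hne
    have hsq : 0 < (a - b) ^ 2 := lt_of_le_of_ne (sq_nonneg _) (Ne.symm (pow_ne_zero 2 h0))
    nlinarith [hsq]
  have hLN : swissL N = (∏ k, d k) ^ 10 * swissL M := by
    rw [hN, swissL_row_scale, hsum]
    unfold swissL
    ring
  have hgt : swissL M < swissL N := by
    rw [hLN]
    have h10 : 1 < (∏ k, d k) ^ 10 := one_lt_pow₀ hP1 (by norm_num)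
    have := mul_lt_mul_of_pos_right h10 hLpos
    linarith
  exact absurd (hmax N hNnn hNrank) (not_le.mpr hgt)

theorem maximizer_has_equal_marginals
    (M : Matrix (Fin 4) (Fin 4) ℝ)
    (hnonneg : ∀ i j, 0 ≤ M i j)
    (hrank : M.rank ≤ 2)
    (hsum : 0 < ∑ i : Fin 4, ∑ j : Fin 4, M i j)
    (hmax : ∀ N : Matrix (Fin 4) (Fin 4) ℝ,
      (∀ i j, 0 ≤ N i j) → N.rank ≤ 2 → swissL N ≤ swissL M) :
    (∀ i i' : Fin 4, ∑ j, M i j = ∑ j, M i' j) ∧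
    (∀ j j' : Fin 4, ∑ i, M i j = ∑ i, M i j') := by
  -- the all-ones matrix has rank 1 ≤ 2 and positive likelihood
  have hones_rank : (Matrix.of (fun _ _ => (1:ℝ)) : Matrix (Fin 4) (Fin 4) ℝ).rank ≤ 2 := by
    have h : (Matrix.of (fun _ _ => (1:ℝ)) : Matrix (Fin 4) (Fin 4) ℝ) =
        (Matrix.of fun _ (_ : Fin 1) => (1:ℝ)) * (Matrix.of fun (_ : Fin 1) _ => (1:ℝ)) := by
      ext i j; simp [Matrix.mul_apply]
    rw [h]
    have h1 := Matrix.rank_mul_le_right (Matrix.of fun (_ : Fin 4) (_ : Fin 1) => (1:ℝ))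
      (Matrix.of fun (_ : Fin 1) (_ : Fin 4) => (1:ℝ))
    have h2 := Matrix.rank_le_card_height (Matrix.of fun (_ : Fin 1) (_ : Fin 4) => (1:ℝ))
    simp at h2
    omega
  have hones_L : swissL (Matrix.of (fun _ _ => (1:ℝ)) : Matrix (Fin 4) (Fin 4) ℝ) =
      1 / 16 ^ 40 := by
    unfold swissL
    norm_num [Fin.sum_univ_four]
  have hLpos : 0 < swissL M := by
    have := hmax (Matrix.of (fun _ _ => (1:ℝ))) (fun _ _ => by norm_num) hones_rank
    rw [hones_L] at this
    have h16 : (0:ℝ) < 1 / 16 ^ 40 := by positivity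
    linarith
  -- all entries are positive
  have hpos : ∀ i j, 0 < M i j := by
    intro i j
    rcases (hnonneg i j).lt_or_eq with h | h
    · exact h
    · exfalso
      have hz : swissL M = 0 := by
        unfold swissL
        rw [Finset.prod_eq_zero (Finset.mem_univ i)
          (Finset.prod_eq_zero (Finset.mem_univ j) (by rw [← h]; split <;> norm_num))]
        simp
      rw [hz] at hLpos
      exact lt_irrefl 0 hLpos
  constructor
  · exact rows_eq M hpos hrank hLpos hmax
  · -- apply the row lemma to the transpose
    have hposT : ∀ i j, 0 < M.transpose i j := fun i j => hpos j i
    have hrankT : M.transpose.rank ≤ 2 := by rw [Matrix.rank_transpose]; exact hrank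
    have hLposT : 0 < swissL M.transpose := by rw [swissL_transpose]; exact hLpos
    have hmaxT : ∀ N : Matrix (Fin 4) (Fin 4) ℝ,
        (∀ i j, 0 ≤ N i j) → N.rank ≤ 2 → swissL N ≤ swissL M.transpose := by
      intro N hNnn hNr
      rw [swissL_transpose]
      exact hmax N hNnn hNr
    intro j j'
    have := rows_eq M.transpose hposT hrankT hLposT hmaxT j j'
    simpa [Matrix.transpose_apply] using this
end

section
/- Let M be a 4×4 real matrix of rank at most 2 and let K be a nonzero real number such that every row sum of M equals 4K and every column sum of M equals 4K. Then there exist vectors e = (e1,e2,e3,e4) and f = (f1,f2,f3,f4) in ℝ⁴ with e1+e2+e3+e4 = 0 and f1+f2+f3+f4 = 0 such that M_{ij} = K + e_i·f_j for all i, j. In particular, K equals the average entry of M. -/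
open Finset

theorem rank_two_equal_marginals_parametrization
    (M : Matrix (Fin 4) (Fin 4) ℝ) (K : ℝ) (hK : K ≠ 0)
    (hrank : M.rank ≤ 2)
    (hrow : ∀ i, ∑ j, M i j = 4 * K)
    (hcol : ∀ j, ∑ i, M i j = 4 * K) :
    (∃ e f : Fin 4 → ℝ,
      (∑ i, e i = 0) ∧ (∑ i, f i = 0) ∧ ∀ i j, M i j = K + e i * f j) ∧
    K = (∑ i : Fin 4, ∑ j : Fin 4, M i j) / 16 := by
  have hsum : (∑ i : Fin 4, ∑ j : Fin 4, M i j) = 16 * K := by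
    simp [hrow, Fin.sum_univ_four]; ring
  refine ⟨?_, by rw [hsum]; ring⟩
  -- set up
  set N : Matrix (Fin 4) (Fin 4) ℝ := Matrix.of (fun i j => M i j - K) with hN
  have hNcol : ∀ j, ∑ i, N i j = 0 := by
    intro j
    simp only [hN, Matrix.of_apply, Finset.sum_sub_distrib, hcol]
    simp [Fin.sum_univ_four]
  have hNrow : ∀ i, ∑ j, N i j = 0 := by
    intro i
    simp only [hN, Matrix.of_apply, Finset.sum_sub_distrib, hrow]
    simp [Fin.sum_univ_four]
  set u : Fin 4 → ℝ := fun _ => 1 with hu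
  -- u is in the range of M
  have huM : u ∈ LinearMap.range M.mulVecLin := by
    refine ⟨(4 * K)⁻¹ • u, ?_⟩
    funext i
    have h4K : (4 : ℝ) * K ≠ 0 := by positivity
    simp [Matrix.mulVecLin, Matrix.mulVec, dotProduct, hu, mul_comm,
      ← Finset.mul_sum, hrow i]
    field_simp
  -- the sum functional
  set φ : (Fin 4 → ℝ) →ₗ[ℝ] ℝ :=
    { toFun := fun y => ∑ i, y i
      map_add' := fun x y => by simp [Finset.sum_add_distrib]
      map_smul' := fun c x => by simp [Finset.mul_sum] } with hφ
  set W : Submodule ℝ (Fin 4 → ℝ) := LinearMap.range M.mulVecLin ⊓ LinearMap.ker φ with hW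
  -- range of N is inside W
  have hNW : LinearMap.range N.mulVecLin ≤ W := by
    rintro y ⟨x, rfl⟩
    constructor
    · -- N.mulVec x = M.mulVec x - (K * ∑ x) • u
      have : N.mulVecLin x = M.mulVecLin x - (K * ∑ j, x j) • u := by
        funext i
        simp [Matrix.mulVecLin, Matrix.mulVec, dotProduct, hN, hu,
          sub_mul, Finset.sum_sub_distrib, Finset.mul_sum]
      rw [this]
      exact sub_mem (LinearMap.mem_range_self _ _) (Submodule.smul_mem _ _ huM)
    · -- column sums of N vanish
      simp only [LinearMap.mem_ker, hφ, LinearMap.coe_mk, AddHom.coe_mk]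
      have h3 : ∑ i, N.mulVecLin x i = ∑ j, (∑ i, N i j) * x j := by
        simp [Matrix.mulVecLin, Matrix.mulVec, dotProduct, Finset.mul_sum]
        rw [Finset.sum_comm]
        simp [Finset.sum_mul]
      show ∑ i, N.mulVecLin x i = 0
      rw [h3]
      simp [hNcol]
  -- W is strictly below the range of M
  have huφ : φ u = 4 := by simp [hφ, hu, Fin.sum_univ_four]; norm_num
  have hWlt : W < LinearMap.range M.mulVecLin := by
    refine lt_of_le_of_ne inf_le_left ?_
    intro h
    have hmem : u ∈ W := h.symm ▸ huM
    have h2 : φ u = 0 := hmem.2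
    rw [huφ] at h2
    norm_num at h2
  have hWfin : Module.finrank ℝ W ≤ 1 := by
    have h1 : Module.finrank ℝ W < Module.finrank ℝ (LinearMap.range M.mulVecLin) :=
      Submodule.finrank_lt_finrank_of_lt hWlt
    have h2 : Module.finrank ℝ (LinearMap.range M.mulVecLin) ≤ 2 := hrank
    omega
  have hNrank : Module.finrank ℝ (LinearMap.range N.mulVecLin) ≤ 1 :=
    le_trans (Submodule.finrank_mono hNW) hWfin
  -- get a principal generator
  obtain ⟨v, hv⟩ := (Submodule.finrank_le_one_iff_isPrincipal _).mp hNrank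
  -- define f
  have hmem : ∀ j : Fin 4, ∃ c : ℝ, c • v = N.mulVecLin (Pi.single j 1) := by
    intro j
    have : N.mulVecLin (Pi.single j 1) ∈ LinearMap.range N.mulVecLin :=
      LinearMap.mem_range_self _ _
    rw [hv] at this
    exact Submodule.mem_span_singleton.mp this
  choose f hf using hmem
  have hNij : ∀ i j, N i j = v i * f j := by
    intro i j
    have h1 : N.mulVecLin (Pi.single j 1) i = N i j := by
      simp [Matrix.mulVecLin, Matrix.mulVec, dotProduct, Pi.single_apply,
        mul_ite, Finset.sum_ite_eq]
    rw [← h1, ← hf j]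
    simp [mul_comm]
  have hMij : ∀ i j, M i j = K + v i * f j := by
    intro i j
    have := hNij i j
    simp only [hN, Matrix.of_apply] at this
    linarith
  -- case split on N = 0
  by_cases hz : ∀ i j, M i j = K
  · exact ⟨0, 0, by simp, by simp, fun i j => by simp [hz i j]⟩
  · push_neg at hz
    obtain ⟨i0, j0, hij0⟩ := hz
    have hv0 : v i0 ≠ 0 := by
      intro h; apply hij0; rw [hMij i0 j0, h]; ring
    have hf0 : f j0 ≠ 0 := by
      intro h; apply hij0; rw [hMij i0 j0, h]; ring
    refine ⟨v, f, ?_, ?_, hMij⟩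
    · -- column sums: (∑ v) * f j0 = 0
      have : ∑ i, N i j0 = (∑ i, v i) * f j0 := by
        simp [hNij, Finset.sum_mul]
      rw [hNcol j0] at this
      exact (mul_eq_zero.mp this.symm).resolve_right hf0
    · have : ∑ j, N i0 j = v i0 * ∑ j, f j := by
        simp [hNij, Finset.mul_sum]
      rw [hNrow i0] at this
      exact (mul_eq_zero.mp this.symm).resolve_left hv0
end

section
/- Let M be a 4×4 real matrix with nonnegative entries, of rank at most 2, with ∑_{i,j} M_{ij} > 0, such that L(M) ≥ L(N) for every 4×4 real matrix N with nonnegative entries and rank at most 2. Suppose M_{kl} = K + e_k·f_l for all k, l, where K is a nonzero real number and e, f ∈ ℝ⁴ have coordinates summing to 0. If e_i = e_j for some indices i, j, then f_i = f_j. -/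
open Finset

/-- The known good competitor matrix. -/
def swB : Matrix (Fin 4) (Fin 4) ℝ := !![3,3,2,2;3,3,2,2;2,2,3,3;2,2,3,3]

lemma swB_nonneg : ∀ i j, 0 ≤ swB i j := by
  intro i j; fin_cases i <;> fin_cases j <;> norm_num [swB]

lemma swB_eq : swB = (!![(1:ℝ),0;1,0;0,1;0,1] : Matrix (Fin 4) (Fin 2) ℝ) *
    (!![(3:ℝ),3,2,2;2,2,3,3] : Matrix (Fin 2) (Fin 4) ℝ) := by
  ext i j
  fin_cases i <;> fin_cases j <;>
    simp [swB, Matrix.mul_apply, Fin.sum_univ_two, Matrix.cons_val_zero, Matrix.cons_val_one,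
      Matrix.head_cons, Matrix.cons_val_two, Matrix.cons_val_three, Matrix.vecHead,
      Matrix.vecTail]

lemma swB_rank : swB.rank ≤ 2 := by
  rw [swB_eq]
  calc ((!![(1:ℝ),0;1,0;0,1;0,1] : Matrix (Fin 4) (Fin 2) ℝ) *
      (!![(3:ℝ),3,2,2;2,2,3,3] : Matrix (Fin 2) (Fin 4) ℝ)).rank
      ≤ ((!![(3:ℝ),3,2,2;2,2,3,3] : Matrix (Fin 2) (Fin 4) ℝ)).rank :=
        Matrix.rank_mul_le_right _ _
    _ ≤ 2 := by
        simpa using Matrix.rank_le_card_height (!![(3:ℝ),3,2,2;2,2,3,3] : Matrix (Fin 2) (Fin 4) ℝ)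

lemma swB_L : swissL swB = (3^24 * 2^16) / 40^40 := by
  rw [swissL]
  have h1 : (∏ i : Fin 4, ∏ j : Fin 4, swB i j ^ (if i = j then 4 else 2)) = 3^24*2^16 := by
    simp [swB, Fin.prod_univ_four, Matrix.cons_val_zero, Matrix.cons_val_one,
      Matrix.head_cons, Matrix.cons_val_two, Matrix.cons_val_three, Matrix.vecHead,
      Matrix.vecTail]
    norm_num
  have h2 : (∑ i : Fin 4, ∑ j : Fin 4, swB i j) = 40 := by
    simp [swB, Fin.sum_univ_four, Matrix.cons_val_zero, Matrix.cons_val_one,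
      Matrix.head_cons, Matrix.cons_val_two, Matrix.cons_val_three, Matrix.vecHead,
      Matrix.vecTail]
    norm_num
  rw [h1, h2]

lemma sw_avg_le (x y : ℝ) : x*y ≤ ((x+y)/2)^2 := by nlinarith [sq_nonneg (x-y)]

lemma sw_avg_lt (x y : ℝ) (h : x ≠ y) : x*y < ((x+y)/2)^2 := by
  have h2 : (x-y)^2 ≠ 0 := pow_ne_zero 2 (sub_ne_zero_of_ne h)
  have h3 : 0 < (x-y)^2 := lt_of_le_of_ne (sq_nonneg _) (Ne.symm h2)
  nlinarith

/-- The key averaging strict inequality for the numerator. -/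
lemma sw_num_lt (M : Matrix (Fin 4) (Fin 4) ℝ) (hpos : ∀ k l, 0 < M k l)
    (i j : Fin 4) (hij : i ≠ j) (hrow : ∀ l, M i l = M j l)
    (k₀ : Fin 4) (hk₀ : M k₀ i ≠ M k₀ j)
    (N : Matrix (Fin 4) (Fin 4) ℝ)
    (hNin : ∀ k l, l = i ∨ l = j → N k l = (M k i + M k j)/2)
    (hNout : ∀ k l, l ≠ i → l ≠ j → N k l = M k l) :
    (∏ k : Fin 4, ∏ l : Fin 4, M k l ^ (if k = l then 4 else 2)) <
    (∏ k : Fin 4, ∏ l : Fin 4, N k l ^ (if k = l then 4 else 2)) := by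
  have hsplit : ∀ (X : Matrix (Fin 4) (Fin 4) ℝ),
      (∏ k : Fin 4, ∏ l : Fin 4, X k l ^ (if k = l then 4 else 2)) =
      (∏ k : Fin 4, (∏ l ∈ univ \ ({i,j} : Finset (Fin 4)), X k l ^ (if k = l then 4 else 2))) *
      (∏ k : Fin 4, X k i ^ (if k = i then 4 else 2) * X k j ^ (if k = j then 4 else 2)) := by
    intro X
    rw [← Finset.prod_mul_distrib]
    refine Finset.prod_congr rfl fun k _ => ?_
    rw [← Finset.prod_sdiff (Finset.subset_univ ({i,j} : Finset (Fin 4))),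
      Finset.prod_pair hij]
  rw [hsplit M, hsplit N]
  have hmem : ∀ l : Fin 4, l ∈ univ \ ({i,j}:Finset (Fin 4)) → l ≠ i ∧ l ≠ j := by
    intro l hl
    simp only [Finset.mem_sdiff, Finset.mem_insert, Finset.mem_singleton] at hl
    exact ⟨fun h => hl.2 (Or.inl h), fun h => hl.2 (Or.inr h)⟩
  have hout : (∏ k : Fin 4, (∏ l ∈ univ \ ({i,j} : Finset (Fin 4)), N k l ^ (if k = l then 4 else 2))) =
      (∏ k : Fin 4, (∏ l ∈ univ \ ({i,j} : Finset (Fin 4)), M k l ^ (if k = l then 4 else 2))) := by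
    refine Finset.prod_congr rfl fun k _ => Finset.prod_congr rfl fun l hl => ?_
    rw [hNout k l (hmem l hl).1 (hmem l hl).2]
  rw [hout]
  have houtpos : 0 < (∏ k : Fin 4, (∏ l ∈ univ \ ({i,j} : Finset (Fin 4)), M k l ^ (if k = l then 4 else 2))) := by
    refine Finset.prod_pos fun k _ => Finset.prod_pos fun l _ => pow_pos (hpos k l) _
  have hgsplit : ∀ (X : Matrix (Fin 4) (Fin 4) ℝ),
      (∏ k : Fin 4, X k i ^ (if k = i then 4 else 2) * X k j ^ (if k = j then 4 else 2)) =
      (∏ k ∈ univ \ ({i,j} : Finset (Fin 4)),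
        X k i ^ (if k = i then 4 else 2) * X k j ^ (if k = j then 4 else 2)) *
      ((X i i ^ 4 * X i j ^ 2) * (X j i ^ 2 * X j j ^ 4)) := by
    intro X
    rw [← Finset.prod_sdiff (Finset.subset_univ ({i,j} : Finset (Fin 4))),
      Finset.prod_pair hij]
    simp only [eq_self_iff_true, if_true, if_neg hij, if_neg (Ne.symm hij)]
  have hNi : ∀ k, N k i = (M k i + M k j)/2 := fun k => hNin k i (Or.inl rfl)
  have hNj : ∀ k, N k j = (M k i + M k j)/2 := fun k => hNin k j (Or.inr rfl)
  have havg_pos : ∀ k, 0 < (M k i + M k j)/2 := fun k => by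
    have := hpos k i; have := hpos k j; linarith
  -- outer factors comparison
  have hterm_le : ∀ k ∈ univ \ ({i,j} : Finset (Fin 4)),
      M k i ^ (if k = i then 4 else 2) * M k j ^ (if k = j then 4 else 2) ≤
      N k i ^ (if k = i then 4 else 2) * N k j ^ (if k = j then 4 else 2) := by
    intro k hk
    obtain ⟨h1, h2⟩ := hmem k hk
    simp only [if_neg h1, if_neg h2, hNi, hNj]
    have h0 : 0 ≤ M k i * M k j := le_of_lt (mul_pos (hpos k i) (hpos k j))
    have hle := mul_self_le_mul_self h0 (sw_avg_le (M k i) (M k j))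
    calc M k i ^ 2 * M k j ^ 2 = (M k i * M k j) * (M k i * M k j) := by ring
      _ ≤ ((M k i + M k j)/2)^2 * ((M k i + M k j)/2)^2 := hle
  have hterm_pos : ∀ k ∈ univ \ ({i,j} : Finset (Fin 4)),
      0 < M k i ^ (if k = i then 4 else 2) * M k j ^ (if k = j then 4 else 2) := fun k _ =>
    mul_pos (pow_pos (hpos k i) _) (pow_pos (hpos k j) _)
  have houterM_pos : 0 < ∏ k ∈ univ \ ({i,j} : Finset (Fin 4)),
      M k i ^ (if k = i then 4 else 2) * M k j ^ (if k = j then 4 else 2) :=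
    Finset.prod_pos hterm_pos
  have houterN_pos : 0 < ∏ k ∈ univ \ ({i,j} : Finset (Fin 4)),
      N k i ^ (if k = i then 4 else 2) * N k j ^ (if k = j then 4 else 2) := by
    refine Finset.prod_pos fun k _ => ?_
    rw [hNi, hNj]
    exact mul_pos (pow_pos (havg_pos k) _) (pow_pos (havg_pos k) _)
  -- pair comparison
  have hji : M j i = M i i := (hrow i).symm
  have hjj : M j j = M i j := (hrow j).symm
  have hab : 0 ≤ M i i * M i j := le_of_lt (mul_pos (hpos i i) (hpos i j))
  have hpairM_eq : (M i i ^ 4 * M i j ^ 2) * (M j i ^ 2 * M j j ^ 4) = (M i i * M i j)^6 := by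
    rw [hji, hjj]; ring
  have hpairN_eq : (N i i ^ 4 * N i j ^ 2) * (N j i ^ 2 * N j j ^ 4) =
      (((M i i + M i j)/2)^2)^6 := by
    rw [hNi, hNj, hNi, hNj, hji, hjj]; ring
  have hpair_le : (M i i ^ 4 * M i j ^ 2) * (M j i ^ 2 * M j j ^ 4) ≤
      (N i i ^ 4 * N i j ^ 2) * (N j i ^ 2 * N j j ^ 4) := by
    rw [hpairM_eq, hpairN_eq]
    exact pow_le_pow_left₀ hab (sw_avg_le (M i i) (M i j)) 6
  have hpairM_pos : 0 < (M i i ^ 4 * M i j ^ 2) * (M j i ^ 2 * M j j ^ 4) :=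
    mul_pos (mul_pos (pow_pos (hpos i i) _) (pow_pos (hpos i j) _))
      (mul_pos (pow_pos (hpos j i) _) (pow_pos (hpos j j) _))
  rw [hgsplit M, hgsplit N]
  refine mul_lt_mul_of_pos_left ?_ houtpos
  by_cases hk0 : k₀ = i ∨ k₀ = j
  · -- strictness in the pair part
    have habne : M i i ≠ M i j := by
      rcases hk0 with h | h
      · rwa [h] at hk₀
      · rw [h, hji, hjj] at hk₀; exact hk₀
    have hpair_lt : (M i i ^ 4 * M i j ^ 2) * (M j i ^ 2 * M j j ^ 4) <
        (N i i ^ 4 * N i j ^ 2) * (N j i ^ 2 * N j j ^ 4) := by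
      rw [hpairM_eq, hpairN_eq]
      exact pow_lt_pow_left₀ (sw_avg_lt (M i i) (M i j) habne) hab (by norm_num)
    have houter_le : (∏ k ∈ univ \ ({i,j} : Finset (Fin 4)),
        M k i ^ (if k = i then 4 else 2) * M k j ^ (if k = j then 4 else 2)) ≤
        ∏ k ∈ univ \ ({i,j} : Finset (Fin 4)),
        N k i ^ (if k = i then 4 else 2) * N k j ^ (if k = j then 4 else 2) :=
      Finset.prod_le_prod (fun k hk => (hterm_pos k hk).le) hterm_le
    calc (∏ k ∈ univ \ ({i,j} : Finset (Fin 4)),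
          M k i ^ (if k = i then 4 else 2) * M k j ^ (if k = j then 4 else 2)) *
          ((M i i ^ 4 * M i j ^ 2) * (M j i ^ 2 * M j j ^ 4))
        ≤ (∏ k ∈ univ \ ({i,j} : Finset (Fin 4)),
          N k i ^ (if k = i then 4 else 2) * N k j ^ (if k = j then 4 else 2)) *
          ((M i i ^ 4 * M i j ^ 2) * (M j i ^ 2 * M j j ^ 4)) :=
          mul_le_mul_of_nonneg_right houter_le hpairM_pos.le
      _ < (∏ k ∈ univ \ ({i,j} : Finset (Fin 4)),
          N k i ^ (if k = i then 4 else 2) * N k j ^ (if k = j then 4 else 2)) *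
          ((N i i ^ 4 * N i j ^ 2) * (N j i ^ 2 * N j j ^ 4)) :=
          mul_lt_mul_of_pos_left hpair_lt houterN_pos
  · -- strictness in the outer part
    push_neg at hk0
    have hk0mem : k₀ ∈ univ \ ({i,j} : Finset (Fin 4)) := by
      simp only [Finset.mem_sdiff, Finset.mem_univ, Finset.mem_insert, Finset.mem_singleton,
        true_and]
      rintro (h | h)
      exacts [hk0.1 h, hk0.2 h]
    have hterm_lt : M k₀ i ^ (if k₀ = i then 4 else 2) * M k₀ j ^ (if k₀ = j then 4 else 2) <
        N k₀ i ^ (if k₀ = i then 4 else 2) * N k₀ j ^ (if k₀ = j then 4 else 2) := by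
      simp only [if_neg hk0.1, if_neg hk0.2, hNi, hNj]
      have h0 : 0 ≤ M k₀ i * M k₀ j := le_of_lt (mul_pos (hpos k₀ i) (hpos k₀ j))
      have hlt := mul_self_lt_mul_self h0 (sw_avg_lt (M k₀ i) (M k₀ j) hk₀)
      calc M k₀ i ^ 2 * M k₀ j ^ 2 = (M k₀ i * M k₀ j) * (M k₀ i * M k₀ j) := by ring
        _ < ((M k₀ i + M k₀ j)/2)^2 * ((M k₀ i + M k₀ j)/2)^2 := hlt
    have houter_lt : (∏ k ∈ univ \ ({i,j} : Finset (Fin 4)),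
        M k i ^ (if k = i then 4 else 2) * M k j ^ (if k = j then 4 else 2)) <
        ∏ k ∈ univ \ ({i,j} : Finset (Fin 4)),
        N k i ^ (if k = i then 4 else 2) * N k j ^ (if k = j then 4 else 2) :=
      Finset.prod_lt_prod hterm_pos hterm_le ⟨k₀, hk0mem, hterm_lt⟩
    calc (∏ k ∈ univ \ ({i,j} : Finset (Fin 4)),
          M k i ^ (if k = i then 4 else 2) * M k j ^ (if k = j then 4 else 2)) *
          ((M i i ^ 4 * M i j ^ 2) * (M j i ^ 2 * M j j ^ 4))
        < (∏ k ∈ univ \ ({i,j} : Finset (Fin 4)),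
          N k i ^ (if k = i then 4 else 2) * N k j ^ (if k = j then 4 else 2)) *
          ((M i i ^ 4 * M i j ^ 2) * (M j i ^ 2 * M j j ^ 4)) :=
          mul_lt_mul_of_pos_right houter_lt hpairM_pos
      _ ≤ (∏ k ∈ univ \ ({i,j} : Finset (Fin 4)),
          N k i ^ (if k = i then 4 else 2) * N k j ^ (if k = j then 4 else 2)) *
          ((N i i ^ 4 * N i j ^ 2) * (N j i ^ 2 * N j j ^ 4)) :=
          mul_le_mul_of_nonneg_left hpair_le houterN_pos.le

theorem maximizer_equal_e_implies_equal_f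
    (M : Matrix (Fin 4) (Fin 4) ℝ)
    (hnonneg : ∀ i j, 0 ≤ M i j)
    (hrank : M.rank ≤ 2)
    (hsum : 0 < ∑ i : Fin 4, ∑ j : Fin 4, M i j)
    (hmax : ∀ N : Matrix (Fin 4) (Fin 4) ℝ,
      (∀ i j, 0 ≤ N i j) → N.rank ≤ 2 → swissL N ≤ swissL M)
    (K : ℝ) (hK : K ≠ 0) (e f : Fin 4 → ℝ)
    (he : ∑ k, e k = 0) (hf : ∑ k, f k = 0)
    (hM : ∀ k l, M k l = K + e k * f l)
    (i j : Fin 4) (hij : e i = e j) :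
    f i = f j := by
  by_cases hii : i = j
  · rw [hii]
  -- positivity of L(M) and of all entries
  have hBle := hmax swB swB_nonneg swB_rank
  have hLBpos : 0 < swissL swB := by rw [swB_L]; positivity
  have hLMpos : 0 < swissL M := lt_of_lt_of_le hLBpos hBle
  have hSpos : (0:ℝ) < (∑ k : Fin 4, ∑ l : Fin 4, M k l) ^ 40 := by positivity
  have hnum : 0 < ∏ k : Fin 4, ∏ l : Fin 4, M k l ^ (if k = l then 4 else 2) := by
    have h := hLMpos
    rw [swissL] at h
    exact (div_pos_iff.mp h).resolve_right (fun ⟨_, h2⟩ => absurd hSpos (not_lt.mpr h2.le)) |>.1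
  have hpos : ∀ k l, 0 < M k l := by
    intro k l
    rcases (hnonneg k l).lt_or_eq with h | h
    · exact h
    · exfalso
      have hz : (∏ k : Fin 4, ∏ l : Fin 4, M k l ^ (if k = l then 4 else 2)) = 0 := by
        refine Finset.prod_eq_zero (Finset.mem_univ k) ?_
        refine Finset.prod_eq_zero (Finset.mem_univ l) ?_
        rw [← h]
        exact zero_pow (by split <;> norm_num)
      rw [hz] at hnum
      exact lt_irrefl _ hnum
  have hrow : ∀ l, M i l = M j l := fun l => by rw [hM, hM, hij]
  -- columns i and j of M coincide
  have hcol : ∀ k, M k i = M k j := by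
    by_contra hc
    push_neg at hc
    obtain ⟨k₀, hk₀⟩ := hc
    set N : Matrix (Fin 4) (Fin 4) ℝ :=
      Matrix.of fun k l => if l = i ∨ l = j then (M k i + M k j)/2 else M k l with hNdef
    have hNin : ∀ k l, l = i ∨ l = j → N k l = (M k i + M k j)/2 := by
      intro k l hl; simp only [hNdef, Matrix.of_apply, if_pos hl]
    have hNout : ∀ k l, l ≠ i → l ≠ j → N k l = M k l := by
      intro k l h1 h2
      simp only [hNdef, Matrix.of_apply]
      rw [if_neg]; rintro (h | h) <;> [exact h1 h; exact h2 h]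
    have hNnn : ∀ k l, 0 ≤ N k l := by
      intro k l
      by_cases hl : l = i ∨ l = j
      · rw [hNin k l hl]; have := (hpos k i).le; have := (hpos k j).le; linarith
      · push_neg at hl; rw [hNout k l hl.1 hl.2]; exact hnonneg k l
    -- rank of N
    have hNrank : N.rank ≤ 2 := by
      set P : Matrix (Fin 4) (Fin 4) ℝ :=
        Matrix.of fun m l => if l = i ∨ l = j then
          ((if m = i then (1:ℝ) else 0) + if m = j then 1 else 0)/2
          else if m = l then 1 else 0 with hPdef
      have hNP : N = M * P := by
        ext k l
        rw [Matrix.mul_apply]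
        by_cases hl : l = i ∨ l = j
        · rw [hNin k l hl]
          simp only [hPdef, Matrix.of_apply, if_pos hl]
          rw [Finset.sum_congr rfl (fun m _ => show
            M k m * (((if m = i then (1:ℝ) else 0) + if m = j then 1 else 0)/2) =
            ((if m = i then M k m else 0) + if m = j then M k m else 0)/2 from by
              split_ifs <;> ring)]
          rw [← Finset.sum_div, Finset.sum_add_distrib, Finset.sum_ite_eq' univ i (M k),
            Finset.sum_ite_eq' univ j (M k)]
          simp
        · push_neg at hl
          rw [hNout k l hl.1 hl.2]
          simp only [hPdef, Matrix.of_apply, if_neg (by rintro (h|h) <;> [exact hl.1 h; exact hl.2 h] :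
            ¬(l = i ∨ l = j))]
          rw [Finset.sum_congr rfl (fun m _ => show
            M k m * (if m = l then (1:ℝ) else 0) = (if m = l then M k m else 0) from by
              split_ifs <;> ring),
            Finset.sum_ite_eq' univ l (M k)]
          simp
      rw [hNP]
      exact le_trans (Matrix.rank_mul_le_left M P) hrank
    -- sums agree
    have hNsum : (∑ k : Fin 4, ∑ l : Fin 4, N k l) = ∑ k : Fin 4, ∑ l : Fin 4, M k l := by
      refine Finset.sum_congr rfl fun k _ => ?_
      have h1 : ∑ l : Fin 4, (N k l - M k l) = ∑ l ∈ ({i,j} : Finset (Fin 4)), (N k l - M k l) := by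
        refine (Finset.sum_subset (Finset.subset_univ _) fun x _ hx => ?_).symm
        simp only [Finset.mem_insert, Finset.mem_singleton] at hx
        push_neg at hx
        rw [hNout k x hx.1 hx.2, sub_self]
      have h2 : ∑ l : Fin 4, (N k l - M k l) = 0 := by
        rw [h1, Finset.sum_pair hii, hNin k i (Or.inl rfl), hNin k j (Or.inr rfl)]
        ring
      have h3 : ∑ l : Fin 4, (N k l - M k l) = (∑ l : Fin 4, N k l) - ∑ l : Fin 4, M k l := by
        rw [Finset.sum_sub_distrib]
      rw [h3] at h2
      linarith
    -- strict improvement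
    have hlt : swissL M < swissL N := by
      rw [swissL, swissL, hNsum]
      exact div_lt_div_of_pos_right (sw_num_lt M hpos i j hii hrow k₀ hk₀ N hNin hNout) hSpos
    exact absurd (hmax N hNnn hNrank) (not_le.mpr hlt)
  -- conclude
  have heq : ∀ k, e k * f i = e k * f j := by
    intro k
    have h := hcol k
    rw [hM, hM] at h
    linarith
  by_cases hez : ∃ k, e k ≠ 0
  · obtain ⟨k, hk⟩ := hez
    exact mul_left_cancel₀ hk (heq k)
  · push_neg at hez
    exfalso
    have hMK : ∀ k l, M k l = K := fun k l => by rw [hM, hez, zero_mul, add_zero]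
    have hKpos : 0 < K := hMK 0 0 ▸ hpos 0 0
    have hLM : swissL M = 1 / 16^40 := by
      rw [swissL]
      have h1 : (∏ k : Fin 4, ∏ l : Fin 4, M k l ^ (if k = l then 4 else 2)) = K^40 := by
        simp only [hMK]
        simp [Fin.prod_univ_four]
        ring
      have h2 : (∑ k : Fin 4, ∑ l : Fin 4, M k l) = 16*K := by
        simp only [hMK]
        simp [Fin.sum_univ_four]
        ring
      rw [h1, h2, mul_pow]
      rw [div_eq_div_iff (by positivity) (by positivity)]
      ring
    have hfinal := hmax swB swB_nonneg swB_rank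
    rw [swB_L, hLM] at hfinal
    rw [div_le_div_iff₀ (by positivity) (by positivity)] at hfinal
    norm_num at hfinal
end

section
/- Let M be a 4×4 real matrix with nonnegative entries, of rank at most 2, with ∑_{i,j} M_{ij} > 0, such that L(M) ≥ L(N) for every 4×4 real matrix N with nonnegative entries and rank at most 2. Suppose M_{kl} = K + e_k·f_l for all k, l, where K is a nonzero real number and e, f ∈ ℝ⁴ have coordinates summing to 0. If e_i > e_j > 0 for some indices i, j, then f_i > f_j > 0. -/
open Finset

set_option maxHeartbeats 1000000

lemma rank_aux (c : ℝ) (u v : Fin 4 → ℝ) :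
    (Matrix.of fun k l => c + u k * v l : Matrix (Fin 4) (Fin 4) ℝ).rank ≤ 2 := by
  have hfac : (Matrix.of fun k l => c + u k * v l : Matrix (Fin 4) (Fin 4) ℝ)
      = (Matrix.of fun k (m : Fin 2) => if m = 0 then 1 else u k) *
        (Matrix.of fun (m : Fin 2) l => if m = 0 then c else v l) := by
    ext k l
    simp [Matrix.mul_apply, Fin.sum_univ_two]
  rw [hfac]
  calc ((Matrix.of fun k (m : Fin 2) => if m = 0 then 1 else u k) *
        (Matrix.of fun (m : Fin 2) l => if m = 0 then c else v l)).rank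
      ≤ (Matrix.of fun (m : Fin 2) l => if m = 0 then c else v l : Matrix (Fin 2) (Fin 4) ℝ).rank :=
        Matrix.rank_mul_le_right _ _
    _ ≤ Fintype.card (Fin 2) := Matrix.rank_le_card_height _
    _ = 2 := by simp

lemma stationarity (M : Matrix (Fin 4) (Fin 4) ℝ)
    (hpos : ∀ k l, 0 < M k l)
    (hmax : ∀ N : Matrix (Fin 4) (Fin 4) ℝ,
      (∀ i j, 0 ≤ N i j) → N.rank ≤ 2 → swissL N ≤ swissL M)
    (C : Matrix (Fin 4) (Fin 4) ℝ)
    (hrk : ∀ t : ℝ, (Matrix.of fun k l => M k l + t * C k l : Matrix (Fin 4) (Fin 4) ℝ).rank ≤ 2)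
    (hCs : ∑ k : Fin 4, ∑ l : Fin 4, C k l = 0) :
    ∑ k : Fin 4, ∑ l : Fin 4, (if k = l then (4:ℝ) else 2) * (C k l / M k l) = 0 := by
  set G : ℝ → ℝ := fun t => ∑ k : Fin 4, ∑ l : Fin 4,
      (if k = l then (4:ℝ) else 2) * Real.log (M k l + t * C k l) with hG
  have hd : HasDerivAt G
      (∑ k : Fin 4, ∑ l : Fin 4, (if k = l then (4:ℝ) else 2) * (C k l / M k l)) 0 := by
    apply HasDerivAt.fun_sum
    intro k _
    apply HasDerivAt.fun_sum
    intro l _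
    have h1 : HasDerivAt (fun t : ℝ => M k l + t * C k l) (C k l) 0 := by
      simpa using ((hasDerivAt_id (0:ℝ)).mul_const (C k l)).const_add (M k l)
    have h2 := h1.log (by simpa using (hpos k l).ne')
    simpa using h2.const_mul (if k = l then (4:ℝ) else 2)
  -- positivity of perturbed entries near 0
  have hev : ∀ᶠ t in nhds (0:ℝ), ∀ p : Fin 4 × Fin 4, 0 < M p.1 p.2 + t * C p.1 p.2 := by
    rw [Filter.eventually_all]
    intro p
    have hc : Filter.Tendsto (fun t : ℝ => M p.1 p.2 + t * C p.1 p.2) (nhds 0)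
        (nhds (M p.1 p.2)) := by
      have : Continuous (fun t : ℝ => M p.1 p.2 + t * C p.1 p.2) := by continuity
      simpa using this.tendsto 0
    exact hc.eventually_const_lt (hpos p.1 p.2)
  have hSpos : 0 < ∑ k : Fin 4, ∑ l : Fin 4, M k l :=
    Finset.sum_pos (fun k _ => Finset.sum_pos (fun l _ => hpos k l) univ_nonempty) univ_nonempty
  have hloc : IsLocalMax G 0 := by
    filter_upwards [hev] with t ht
    set N : Matrix (Fin 4) (Fin 4) ℝ := Matrix.of fun k l => M k l + t * C k l with hN
    have hNpos : ∀ k l, 0 < N k l := fun k l => ht (k, l)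
    have hle := hmax N (fun k l => (hNpos k l).le) (hrk t)
    have hden : ∑ k : Fin 4, ∑ l : Fin 4, N k l = ∑ k : Fin 4, ∑ l : Fin 4, M k l := by
      simp only [hN, Matrix.of_apply, Finset.sum_add_distrib, ← Finset.mul_sum]
      rw [hCs, mul_zero, add_zero]
    unfold swissL at hle
    rw [hden] at hle
    have hnum : (∏ k : Fin 4, ∏ l : Fin 4, N k l ^ (if k = l then 4 else 2))
        ≤ ∏ k : Fin 4, ∏ l : Fin 4, M k l ^ (if k = l then 4 else 2) := by
      have hdpos : (0:ℝ) < (∑ k : Fin 4, ∑ l : Fin 4, M k l) ^ 40 := by positivity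
      exact (div_le_div_iff_of_pos_right hdpos).mp hle
    have hNnum : (0:ℝ) < ∏ k : Fin 4, ∏ l : Fin 4, N k l ^ (if k = l then 4 else 2) := by
      apply Finset.prod_pos; intro k _; apply Finset.prod_pos; intro l _
      exact pow_pos (hNpos k l) _
    have hlog : ∀ (A : Matrix (Fin 4) (Fin 4) ℝ), (∀ k l, 0 < A k l) →
        Real.log (∏ k : Fin 4, ∏ l : Fin 4, A k l ^ (if k = l then 4 else 2)) =
        ∑ k : Fin 4, ∑ l : Fin 4, (if k = l then (4:ℝ) else 2) * Real.log (A k l) := by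
      intro A hA
      rw [Real.log_prod]
      · refine Finset.sum_congr rfl fun k _ => ?_
        rw [Real.log_prod]
        · refine Finset.sum_congr rfl fun l _ => ?_
          rw [Real.log_pow]
          split <;> norm_num
        · intro l _
          exact pow_ne_zero _ (hA k l).ne'
      · intro k _
        exact Finset.prod_ne_zero_iff.mpr fun l _ => pow_ne_zero _ (hA k l).ne'
    have hGt : G t = Real.log (∏ k : Fin 4, ∏ l : Fin 4, N k l ^ (if k = l then 4 else 2)) := by
      rw [hlog N hNpos]
      simp only [hG, hN, Matrix.of_apply]
    have hG0 : G 0 = Real.log (∏ k : Fin 4, ∏ l : Fin 4, M k l ^ (if k = l then 4 else 2)) := by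
      rw [hlog M hpos, hG]
      simp
    rw [hGt, hG0]
    exact Real.log_le_log hNnum hnum
  exact hloc.hasDerivAt_eq_zero hd

theorem maximizer_order_e_implies_order_f
    (M : Matrix (Fin 4) (Fin 4) ℝ)
    (hnonneg : ∀ i j, 0 ≤ M i j)
    (hrank : M.rank ≤ 2)
    (hsum : 0 < ∑ i : Fin 4, ∑ j : Fin 4, M i j)
    (hmax : ∀ N : Matrix (Fin 4) (Fin 4) ℝ,
      (∀ i j, 0 ≤ N i j) → N.rank ≤ 2 → swissL N ≤ swissL M)
    (K : ℝ) (hK : K ≠ 0) (e f : Fin 4 → ℝ)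
    (he : ∑ k, e k = 0) (hf : ∑ k, f k = 0)
    (hM : ∀ k l, M k l = K + e k * f l)
    (i j : Fin 4) (hij : e i > e j) (hj : e j > 0) :
    f i > f j ∧ f j > 0 := by
  have hrow : ∀ k, ∑ l, M k l = 4 * K := by
    intro k
    simp only [hM, Finset.sum_add_distrib, Finset.sum_const, card_univ, Fintype.card_fin,
      nsmul_eq_mul, ← Finset.mul_sum, hf, mul_zero, add_zero]
    norm_num
  have hK16 : ∑ k : Fin 4, ∑ l : Fin 4, M k l = 16 * K := by
    rw [Finset.sum_congr rfl fun k _ => hrow k, Finset.sum_const, card_univ]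
    simp
    ring
  have hKpos : 0 < K := by nlinarith [hsum, hK16]
  -- all entries positive
  have hone : swissL (Matrix.of fun _ _ => (1:ℝ)) ≤ swissL M := by
    apply hmax
    · intro _ _; norm_num
    · have h1 : (Matrix.of fun _ _ => (1:ℝ) : Matrix (Fin 4) (Fin 4) ℝ)
          = Matrix.of fun k l => 1 + (fun _ : Fin 4 => (0:ℝ)) k * (fun _ : Fin 4 => (0:ℝ)) l := by
        funext k l; simp
      rw [h1]; exact rank_aux 1 _ _
  have h1pos : 0 < swissL (Matrix.of fun _ _ => (1:ℝ)) := by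
    unfold swissL
    norm_num [Finset.sum_const]
  have hLMpos : 0 < swissL M := lt_of_lt_of_le h1pos hone
  have hpos : ∀ k l, 0 < M k l := by
    intro k l
    rcases (hnonneg k l).eq_or_lt with h0 | h
    · exfalso
      have hz : (∏ a : Fin 4, ∏ b : Fin 4, M a b ^ (if a = b then 4 else 2)) = 0 := by
        apply Finset.prod_eq_zero (Finset.mem_univ k)
        apply Finset.prod_eq_zero (Finset.mem_univ l)
        rw [← h0]
        exact zero_pow (by split <;> norm_num)
      unfold swissL at hLMpos
      rw [hz] at hLMpos
      simp at hLMpos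
    · exact h
  have colstat : ∀ l0 : Fin 4, (∑ k, e k / M k l0) + e l0 / M l0 l0 = 0 := by
    intro l0
    have hst := stationarity M hpos hmax
      (Matrix.of fun k l => e k * (if l = l0 then 1 else 0))
      (fun t => by
        have hEq : (Matrix.of fun k l => M k l +
              t * (Matrix.of fun k l => e k * (if l = l0 then 1 else 0)) k l
            : Matrix (Fin 4) (Fin 4) ℝ)
            = Matrix.of fun k l => K + e k * (f l + t * (if l = l0 then 1 else 0)) := by
          funext k l
          simp only [Matrix.of_apply, hM]
          ring
        rw [hEq]
        exact rank_aux K e _)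
      (by
        simp only [Matrix.of_apply, mul_ite, mul_one, mul_zero, Finset.sum_ite_eq',
          Finset.mem_univ, if_true]
        exact he)
    simp only [Matrix.of_apply, mul_ite, mul_one, mul_zero, ite_div, zero_div,
      Finset.sum_ite_eq', Finset.mem_univ, if_true] at hst
    have hsplit : ∀ k : Fin 4, (if k = l0 then (4:ℝ) else 2) * (e k / M k l0)
        = 2 * (e k / M k l0) + (if k = l0 then 2 * (e k / M k l0) else 0) := by
      intro k; split <;> ring
    rw [Finset.sum_congr rfl fun k _ => hsplit k, Finset.sum_add_distrib,
      Finset.sum_ite_eq' univ l0, ← Finset.mul_sum] at hst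
    simp only [Finset.mem_univ, if_true] at hst
    linarith
  have rowstat : (∑ l, f l / M j l) + f j / M j j = 0 := by
    have hst := stationarity M hpos hmax
      (Matrix.of fun k l => (if k = j then 1 else 0) * f l)
      (fun t => by
        have hEq : (Matrix.of fun k l => M k l +
              t * (Matrix.of fun k l => (if k = j then 1 else 0) * f l) k l
            : Matrix (Fin 4) (Fin 4) ℝ)
            = Matrix.of fun k l => K + (e k + t * (if k = j then 1 else 0)) * f l := by
          funext k l
          simp only [Matrix.of_apply, hM]
          ring
        rw [hEq]
        exact rank_aux K _ f)
      (by
        simp only [Matrix.of_apply, ite_mul, one_mul, zero_mul, ← Finset.mul_sum, hf, mul_zero]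
        simpa using hf)
    simp only [Matrix.of_apply, ite_mul, one_mul, zero_mul, ite_div, zero_div,
      mul_ite, mul_zero, Finset.sum_ite_irrel, Finset.sum_const_zero,
      Finset.sum_ite_eq', Finset.mem_univ, if_true] at hst
    have hsplit : ∀ l : Fin 4, (if j = l then (4:ℝ) * (f l / M j l) else 2 * (f l / M j l))
        = 2 * (f l / M j l) + (if j = l then 2 * (f l / M j l) else 0) := by
      intro l; split <;> ring
    rw [Finset.sum_congr rfl fun l _ => hsplit l, Finset.sum_add_distrib,
      Finset.sum_ite_eq univ j, ← Finset.mul_sum] at hst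
    simp only [Finset.mem_univ, if_true] at hst
    linarith
  -- Step B : f j < f i
  set S := ∑ k, e k ^ 2 / (M k i * M k j) with hSdef
  have hdiff : (∑ k, e k / M k i) - (∑ k, e k / M k j) = (f j - f i) * S := by
    rw [hSdef, Finset.mul_sum, ← Finset.sum_sub_distrib]
    refine Finset.sum_congr rfl fun k _ => ?_
    have p1 := (hpos k i).ne'
    have p2 := (hpos k j).ne'
    field_simp
    rw [hM k i, hM k j]
    ring
  have hq : e j / M j j - e i / M i i = (f j - f i) * S := by
    have h1 := colstat i
    have h2 := colstat j
    linarith [hdiff]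
  have hSpos : 0 < S := by
    apply Finset.sum_pos'
      (fun k _ => div_nonneg (sq_nonneg _) (mul_pos (hpos k i) (hpos k j)).le)
    exact ⟨j, Finset.mem_univ j, div_pos (pow_pos hj 2) (mul_pos (hpos j i) (hpos j j))⟩
  have hMii := hpos i i
  have hMjj := hpos j j
  have hkey : e j * M i i - e i * M j j = (f j - f i) * S * (M i i * M j j) := by
    have h4 : (e j / M j j - e i / M i i) * (M i i * M j j) = e j * M i i - e i * M j j := by
      field_simp
    rw [← h4, hq]
  have hsub : e j * M i i - e i * M j j = K * (e j - e i) + e i * e j * (f i - f j) := by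
    rw [hM i i, hM j j]; ring
  have hlin : K * (e j - e i) + e i * e j * (f i - f j) = (f j - f i) * S * (M i i * M j j) := by
    linarith
  have hBfij : f j < f i := by
    by_contra hcon
    push_neg at hcon
    nlinarith [hlin, mul_pos hSpos (mul_pos hMii hMjj), mul_pos (hj.trans hij) hj,
      hij, hKpos, hcon]
  -- Step C : 0 < f j
  have hMji : M j i ≠ M j j := by
    rw [hM j i, hM j j]
    intro hcc
    have h0 : e j * (f i - f j) = 0 := by linarith
    rcases mul_eq_zero.mp h0 with h | h
    · exact hj.ne' h
    · exact (sub_ne_zero.mpr hBfij.ne').symm (by linarith)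
  have htan : ∀ x : ℝ, 0 < x → 2 / K - x / K ^ 2 ≤ x⁻¹ := by
    intro x hx
    have h1 : (2 / K - x / K ^ 2) * x ≤ 1 := by
      have hEq : (2 / K - x / K ^ 2) * x = (2 * K * x - x ^ 2) / K ^ 2 := by
        field_simp
      rw [hEq, div_le_one (by positivity)]
      nlinarith [sq_nonneg (x - K)]
    calc 2 / K - x / K ^ 2 = (2 / K - x / K ^ 2) * x / x :=
          (mul_div_cancel_right₀ _ hx.ne').symm
      _ ≤ 1 / x := (div_le_div_iff_of_pos_right hx).mpr h1
      _ = x⁻¹ := one_div x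
  have hwit : ∃ l0 : Fin 4, M j l0 ≠ K := by
    by_cases h1 : M j i = K
    · exact ⟨j, fun hh => hMji (by rw [h1, hh])⟩
    · exact ⟨i, h1⟩
  obtain ⟨l0, hl0⟩ := hwit
  have htanstrict : 2 / K - M j l0 / K ^ 2 < (M j l0)⁻¹ := by
    have hx := hpos j l0
    have h1 : (2 / K - M j l0 / K ^ 2) * M j l0 < 1 := by
      have hEq : (2 / K - M j l0 / K ^ 2) * M j l0 = (2 * K * M j l0 - M j l0 ^ 2) / K ^ 2 := by
        field_simp
      rw [hEq, div_lt_one (by positivity)]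
      have h2 : 0 < (M j l0 - K) ^ 2 := by
        have := sub_ne_zero.mpr hl0
        positivity
      nlinarith
    calc 2 / K - M j l0 / K ^ 2 = (2 / K - M j l0 / K ^ 2) * M j l0 / M j l0 :=
          (mul_div_cancel_right₀ _ hx.ne').symm
      _ < 1 / M j l0 := (div_lt_div_iff_of_pos_right hx).mpr h1
      _ = (M j l0)⁻¹ := one_div _
  have hinv : 4 / K < ∑ l, (M j l)⁻¹ := by
    have hlt : ∑ l : Fin 4, (2 / K - M j l / K ^ 2) < ∑ l : Fin 4, (M j l)⁻¹ :=
      Finset.sum_lt_sum (fun l _ => htan (M j l) (hpos j l))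
        ⟨l0, Finset.mem_univ l0, htanstrict⟩
    have heq : ∑ l : Fin 4, (2 / K - M j l / K ^ 2) = 4 / K := by
      rw [Finset.sum_sub_distrib, Finset.sum_const, ← Finset.sum_div, hrow j]
      simp
      field_simp
      ring
    linarith
  have hTeq : ∑ l, f l / M j l = (4 - K * (∑ l, (M j l)⁻¹)) / e j := by
    rw [eq_div_iff hj.ne', Finset.sum_mul]
    have hterm : ∀ l : Fin 4, f l / M j l * e j = 1 - K * (M j l)⁻¹ := by
      intro l
      have hx := (hpos j l).ne'
      field_simp
      rw [hM j l]
      ring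
    rw [Finset.sum_congr rfl fun l _ => hterm l, Finset.sum_sub_distrib, ← Finset.mul_sum]
    simp
  have hT : ∑ l, f l / M j l < 0 := by
    rw [hTeq]
    apply div_neg_of_neg_of_pos _ hj
    have h4 : 4 < (∑ l, (M j l)⁻¹) * K := (div_lt_iff₀ hKpos).mp hinv
    linarith [h4, mul_comm K (∑ l, (M j l)⁻¹)]
  have hfj : 0 < f j := by
    have h0 : 0 < f j / M j j := by linarith
    by_contra hc
    push_neg at hc
    have : f j / M j j ≤ 0 := div_nonpos_of_nonpos_of_nonneg hc (hpos j j).le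
    linarith
  exact ⟨hBfij, hfj⟩
end

section
/- Let M be a 4×4 real matrix with nonnegative entries, of rank at most 2, with ∑_{i,j} M_{ij} > 0, such that L(M) ≥ L(N) for every 4×4 real matrix N with nonnegative entries and rank at most 2. Then no three rows of M are equal to each other; that is, there do not exist distinct indices i, j, k such that row i, row j and row k of M coincide. -/
open Finset

lemma swiss_sum4 {β : Type*} [AddCommMonoid β] {i j k l : Fin 4} (hij : i≠j) (hik : i≠k)
    (hil : i≠l) (hjk : j≠k) (hjl : j≠l) (hkl : k≠l) (f : Fin 4 → β) :
    ∑ r, f r = f i + (f j + (f k + f l)) := by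
  have huniv : (Finset.univ : Finset (Fin 4)) = {i,j,k,l} := by
    symm; apply Finset.eq_univ_of_card
    rw [Finset.card_insert_of_notMem (by simp [hij, hik, hil]),
        Finset.card_insert_of_notMem (by simp [hjk, hjl]),
        Finset.card_insert_of_notMem (by simp [hkl]), Finset.card_singleton]
    rfl
  rw [huniv, Finset.sum_insert (by simp [hij, hik, hil]),
      Finset.sum_insert (by simp [hjk, hjl]),
      Finset.sum_insert (by simp [hkl]), Finset.sum_singleton]

lemma swiss_prod4 {β : Type*} [CommMonoid β] {i j k l : Fin 4} (hij : i≠j) (hik : i≠k)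
    (hil : i≠l) (hjk : j≠k) (hjl : j≠l) (hkl : k≠l) (f : Fin 4 → β) :
    ∏ r, f r = f i * (f j * (f k * f l)) := by
  have huniv : (Finset.univ : Finset (Fin 4)) = {i,j,k,l} := by
    symm; apply Finset.eq_univ_of_card
    rw [Finset.card_insert_of_notMem (by simp [hij, hik, hil]),
        Finset.card_insert_of_notMem (by simp [hjk, hjl]),
        Finset.card_insert_of_notMem (by simp [hkl]), Finset.card_singleton]
    rfl
  rw [huniv, Finset.prod_insert (by simp [hij, hik, hil]),
      Finset.prod_insert (by simp [hjk, hjl]),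
      Finset.prod_insert (by simp [hkl]), Finset.prod_singleton]

lemma swiss_rpow_helper (x : ℝ) (hx : 0 ≤ x) (e : ℕ) (w : ℝ) (hw : w * 40 = e) :
    (x ^ w) ^ (40 : ℕ) = x ^ e := by
  rw [← Real.rpow_natCast (x ^ w) 40, ← Real.rpow_mul hx]
  rw [show w * (40:ℕ) = (e:ℝ) by rw [← hw]; norm_num, Real.rpow_natCast]

lemma swiss_amgm8 (a b c d p q r s : ℝ) (ha : 0 ≤ a) (hb : 0 ≤ b) (hc : 0 ≤ c) (hd : 0 ≤ d)
    (hp : 0 ≤ p) (hq : 0 ≤ q) (hr : 0 ≤ r) (hs : 0 ≤ s) :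
    (5*a)^8 * (5*b)^8 * (5*c)^8 * ((20/3)*d)^6 * (20*p)^2 * (20*q)^2 * (20*r)^2 * (10*s)^4
      ≤ (a+b+c+d+p+q+r+s)^40 := by
  have key := Real.geom_mean_le_arith_mean_weighted Finset.univ
    (![8/40, 8/40, 8/40, 6/40, 2/40, 2/40, 2/40, 4/40] : Fin 8 → ℝ)
    (![5*a, 5*b, 5*c, (20/3)*d, 20*p, 20*q, 20*r, 10*s] : Fin 8 → ℝ)
    (by simp only [Finset.mem_univ, true_implies, Fin.forall_fin_succ,
          Matrix.cons_val_zero, Matrix.cons_val_succ]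
        repeat' constructor
        all_goals norm_num)
    (by simp [Fin.sum_univ_succ, Matrix.cons_val_zero, Matrix.cons_val_succ]; norm_num)
    (by simp only [Finset.mem_univ, true_implies, Fin.forall_fin_succ,
          Matrix.cons_val_zero, Matrix.cons_val_succ]
        repeat' constructor
        all_goals first | positivity | exact fun i => i.elim0)
  simp only [Fin.prod_univ_succ, Fin.sum_univ_succ, Matrix.cons_val_zero,
    Matrix.cons_val_succ, Finset.prod_empty, Finset.sum_empty,
    Fin.prod_univ_zero, Fin.sum_univ_zero, mul_one, add_zero] at key
  have key' : (5*a) ^ ((8:ℝ)/40) * ((5*b) ^ ((8:ℝ)/40) * ((5*c) ^ ((8:ℝ)/40) *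
      ((20/3*d) ^ ((6:ℝ)/40) * ((20*p) ^ ((2:ℝ)/40) * ((20*q) ^ ((2:ℝ)/40) *
      ((20*r) ^ ((2:ℝ)/40) * (10*s) ^ ((4:ℝ)/40)))))))
      ≤ a+b+c+d+p+q+r+s := by linarith [key]
  have hL0 : (0:ℝ) ≤ (5*a) ^ ((8:ℝ)/40) * ((5*b) ^ ((8:ℝ)/40) * ((5*c) ^ ((8:ℝ)/40) *
      ((20/3*d) ^ ((6:ℝ)/40) * ((20*p) ^ ((2:ℝ)/40) * ((20*q) ^ ((2:ℝ)/40) *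
      ((20*r) ^ ((2:ℝ)/40) * (10*s) ^ ((4:ℝ)/40))))))) := by positivity
  have h40 := pow_le_pow_left₀ hL0 key' 40
  calc (5*a)^8 * (5*b)^8 * (5*c)^8 * ((20/3)*d)^6 * (20*p)^2 * (20*q)^2 * (20*r)^2 * (10*s)^4
      = ((5*a) ^ ((8:ℝ)/40)) ^ (40:ℕ) * (((5*b) ^ ((8:ℝ)/40)) ^ (40:ℕ) *
        (((5*c) ^ ((8:ℝ)/40)) ^ (40:ℕ) * (((20/3*d) ^ ((6:ℝ)/40)) ^ (40:ℕ) *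
        (((20*p) ^ ((2:ℝ)/40)) ^ (40:ℕ) * (((20*q) ^ ((2:ℝ)/40)) ^ (40:ℕ) *
        (((20*r) ^ ((2:ℝ)/40)) ^ (40:ℕ) * ((10*s) ^ ((4:ℝ)/40)) ^ (40:ℕ))))))) := by
        rw [swiss_rpow_helper _ (by positivity) 8 _ (by norm_num),
            swiss_rpow_helper _ (by positivity) 8 _ (by norm_num),
            swiss_rpow_helper _ (by positivity) 8 _ (by norm_num),
            swiss_rpow_helper _ (by positivity) 6 _ (by norm_num),
            swiss_rpow_helper _ (by positivity) 2 _ (by norm_num),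
            swiss_rpow_helper _ (by positivity) 2 _ (by norm_num),
            swiss_rpow_helper _ (by positivity) 2 _ (by norm_num),
            swiss_rpow_helper _ (by positivity) 4 _ (by norm_num)]
        ring
    _ ≤ (a+b+c+d+p+q+r+s)^40 := by
        calc _ = ((5*a) ^ ((8:ℝ)/40) * ((5*b) ^ ((8:ℝ)/40) * ((5*c) ^ ((8:ℝ)/40) *
            ((20/3*d) ^ ((6:ℝ)/40) * ((20*p) ^ ((2:ℝ)/40) * ((20*q) ^ ((2:ℝ)/40) *
            ((20*r) ^ ((2:ℝ)/40) * (10*s) ^ ((4:ℝ)/40)))))))) ^ (40:ℕ) := by ring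
          _ ≤ _ := h40

lemma swiss_three_rows_bound (M : Matrix (Fin 4) (Fin 4) ℝ) (hnn : ∀ i j, 0 ≤ M i j)
    {i j k l : Fin 4} (hij : i≠j) (hik : i≠k) (hil : i≠l)
    (hjk : j≠k) (hjl : j≠l) (hkl : k≠l)
    (h1 : M i = M j) (h2 : M j = M k)
    (hS : 0 < ∑ r : Fin 4, ∑ c : Fin 4, M r c) :
    swissL M ≤ 2^92 / (3^24 * 40^40) := by
  have hik' : M i = M k := h1.trans h2
  have hsum_eq : ∑ r : Fin 4, ∑ c : Fin 4, M r c =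
      3*(M i i) + 3*(M i j) + 3*(M i k) + 3*(M i l) + M l i + M l j + M l k + M l l := by
    rw [swiss_sum4 hij hik hil hjk hjl hkl (fun r => ∑ c, M r c)]
    simp only [← h1, ← hik']
    rw [swiss_sum4 hij hik hil hjk hjl hkl (M i), swiss_sum4 hij hik hil hjk hjl hkl (M l)]
    ring
  have hnum : (∏ r : Fin 4, ∏ c : Fin 4, M r c ^ (if r = c then 4 else 2)) =
      M i i^8 * M i j^8 * M i k^8 * M i l^6 * M l i^2 * M l j^2 * M l k^2 * M l l^4 := by
    rw [swiss_prod4 hij hik hil hjk hjl hkl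
        (fun r => ∏ c, M r c ^ (if r = c then 4 else 2))]
    simp only [swiss_prod4 hij hik hil hjk hjl hkl]
    simp only [← h1, ← hik']
    simp only [if_pos rfl, if_neg hij, if_neg hik, if_neg hil, if_neg hjk, if_neg hjl,
      if_neg hkl, if_neg (Ne.symm hij), if_neg (Ne.symm hik), if_neg (Ne.symm hil),
      if_neg (Ne.symm hjk), if_neg (Ne.symm hjl), if_neg (Ne.symm hkl), if_true]
    ring
  rw [swissL, hnum, hsum_eq, div_le_iff₀ (pow_pos (by rw [← hsum_eq]; exact hS) 40)]
  have hA := swiss_amgm8 (3*M i i) (3*M i j) (3*M i k) (3*M i l) (M l i) (M l j) (M l k) (M l l)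
    (by have := hnn i i; linarith) (by have := hnn i j; linarith)
    (by have := hnn i k; linarith) (by have := hnn i l; linarith)
    (hnn l i) (hnn l j) (hnn l k) (hnn l l)
  have hE : (5*(3*M i i))^8 * (5*(3*M i j))^8 * (5*(3*M i k))^8 * ((20/3)*(3*M i l))^6 *
      (20*M l i)^2 * (20*M l j)^2 * (20*M l k)^2 * (10*M l l)^4
      = (M i i^8 * M i j^8 * M i k^8 * M i l^6 * M l i^2 * M l j^2 * M l k^2 * M l l^4) *
        (3^24 * 5^40 * 2^28) := by ring
  rw [hE] at hA
  have hT : 3*M i i + 3*M i j + 3*M i k + 3*M i l + M l i + M l j + M l k + M l l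
      = 3*(M i i) + 3*(M i j) + 3*(M i k) + 3*(M i l) + M l i + M l j + M l k + M l l := by ring
  rw [hT] at hA
  have hB : (2:ℝ)^92/(3^24*40^40) = 1/(3^24 * 5^40 * 2^28) := by norm_num
  rw [hB, one_div, inv_mul_eq_div, le_div_iff₀ (by positivity : (0:ℝ) < 3^24 * 5^40 * 2^28)]
  exact hA

theorem maximizer_has_no_three_equal_rows
    (M : Matrix (Fin 4) (Fin 4) ℝ)
    (hnonneg : ∀ i j, 0 ≤ M i j)
    (hrank : M.rank ≤ 2)
    (hsum : 0 < ∑ i : Fin 4, ∑ j : Fin 4, M i j)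
    (hmax : ∀ N : Matrix (Fin 4) (Fin 4) ℝ,
      (∀ i j, 0 ≤ N i j) → N.rank ≤ 2 → swissL N ≤ swissL M) :
    ¬ ∃ i j k : Fin 4, i ≠ j ∧ i ≠ k ∧ j ≠ k ∧ M i = M j ∧ M j = M k := by
  rintro ⟨i, j, k, hij, hik, hjk, h1, h2⟩
  -- find the fourth index
  have hex : ∃ l, l ∉ ({i,j,k} : Finset (Fin 4)) := by
    by_contra h
    push_neg at h
    have hsub : (Finset.univ : Finset (Fin 4)) ⊆ {i,j,k} := fun x _ => h x
    have hcard : ({i,j,k} : Finset (Fin 4)).card = 3 := by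
      rw [Finset.card_insert_of_notMem (by simp [hij, hik]),
          Finset.card_insert_of_notMem (by simp [hjk]), Finset.card_singleton]
    have := Finset.card_le_card hsub
    rw [hcard] at this
    simp at this
  obtain ⟨l, hl⟩ := hex
  simp only [Finset.mem_insert, Finset.mem_singleton, not_or] at hl
  obtain ⟨hli, hlj, hlk⟩ := hl
  have hbound := swiss_three_rows_bound M hnonneg hij hik (Ne.symm hli) hjk (Ne.symm hlj)
    (Ne.symm hlk) h1 h2 hsum
  -- the competitor matrix
  set M₀ : Matrix (Fin 4) (Fin 4) ℝ := Matrix.of !![3,3,2,2;3,3,2,2;2,2,3,3;2,2,3,3] with hM₀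
  have hof : Matrix.of (!![(3:ℝ),3,2,2;3,3,2,2;2,2,3,3;2,2,3,3] : Matrix (Fin 4) (Fin 4) ℝ) =
      !![(3:ℝ),3,2,2;3,3,2,2;2,2,3,3;2,2,3,3] := rfl
  rw [hof] at hM₀
  have hM₀nn : ∀ a b, 0 ≤ M₀ a b := by
    intro a b
    fin_cases a <;> fin_cases b <;> norm_num [hM₀, Matrix.vecHead, Matrix.vecTail]
  have hM₀rank : M₀.rank ≤ 2 := by
    have h : M₀ = (!![(1:ℝ),0;1,0;0,1;0,1]) * (!![(3:ℝ),3,2,2;2,2,3,3]) := by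
      ext a b
      fin_cases a <;> fin_cases b <;>
        simp [hM₀, Matrix.mul_apply, Fin.sum_univ_two, Matrix.vecHead, Matrix.vecTail]
    rw [h]
    exact le_trans (Matrix.rank_mul_le_right _ _)
      (le_trans (Matrix.rank_le_card_height _) (by simp))
  have hM₀L : swissL M₀ = 3^24 * 2^16 / 40^40 := by
    simp [hM₀, swissL, Fin.prod_univ_four, Fin.sum_univ_four, Matrix.vecHead, Matrix.vecTail]
    norm_num
  have hle := hmax M₀ hM₀nn hM₀rank
  rw [hM₀L] at hle
  have hlt : (2:ℝ)^92/(3^24*40^40) < 3^24 * 2^16 / 40^40 := by norm_num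
  linarith
end

section
/- Every 2×2 real matrix P with nonnegative entries summing to 1 lies in the latent class model with r = 2 classes: there exist λ ∈ [0,1], probability vectors a, b, c, d ∈ ℝ² (entries nonnegative and summing to 1) such that P_{ij} = λ·a_i·b_j + (1−λ)·c_i·d_j for all i, j ∈ {1,2}. -/
open Finset

theorem two_by_two_latent_class_model_fills_simplex
    (P : Matrix (Fin 2) (Fin 2) ℝ)
    (hnonneg : ∀ i j, 0 ≤ P i j)
    (hsum : ∑ i : Fin 2, ∑ j : Fin 2, P i j = 1) :
    ∃ (lam : ℝ) (a b c d : Fin 2 → ℝ),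
      0 ≤ lam ∧ lam ≤ 1 ∧
      (∀ i, 0 ≤ a i) ∧ (∑ i, a i = 1) ∧
      (∀ i, 0 ≤ b i) ∧ (∑ i, b i = 1) ∧
      (∀ i, 0 ≤ c i) ∧ (∑ i, c i = 1) ∧
      (∀ i, 0 ≤ d i) ∧ (∑ i, d i = 1) ∧
      ∀ i j, P i j = lam * a i * b j + (1 - lam) * c i * d j := by
  set r0 : ℝ := P 0 0 + P 0 1 with hr0
  set r1 : ℝ := P 1 0 + P 1 1 with hr1
  have hsum' : r0 + r1 = 1 := by
    simpa [Fin.sum_univ_two, hr0, hr1] using hsum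
  have hr0nn : 0 ≤ r0 := add_nonneg (hnonneg 0 0) (hnonneg 0 1)
  have hr1nn : 0 ≤ r1 := add_nonneg (hnonneg 1 0) (hnonneg 1 1)
  refine ⟨r0, ![1, 0], (if r0 = 0 then ![1, 0] else fun j => P 0 j / r0),
    ![0, 1], (if r1 = 0 then ![1, 0] else fun j => P 1 j / r1),
    hr0nn, by linarith, ?_, by simp [Fin.sum_univ_two], ?_, ?_,
    ?_, by simp [Fin.sum_univ_two], ?_, ?_, ?_⟩
  · intro i; fin_cases i <;> norm_num
  · intro i
    split_ifs with h
    · fin_cases i <;> norm_num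
    · exact div_nonneg (hnonneg 0 i) hr0nn
  · split_ifs with h
    · simp [Fin.sum_univ_two]
    · rw [Fin.sum_univ_two, ← add_div, div_eq_one_iff_eq h, hr0]
  · intro i; fin_cases i <;> norm_num
  · intro i
    split_ifs with h
    · fin_cases i <;> norm_num
    · exact div_nonneg (hnonneg 1 i) hr1nn
  · split_ifs with h
    · simp [Fin.sum_univ_two]
    · rw [Fin.sum_univ_two, ← add_div, div_eq_one_iff_eq h, hr1]
  · have hb : ∀ j, P 0 j = r0 * (if r0 = 0 then ![1, 0] else fun j => P 0 j / r0) j := by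
      intro j
      split_ifs with h
      · have h0 : P 0 j = 0 := by
          fin_cases j
          · show P 0 0 = 0; nlinarith [hnonneg 0 0, hnonneg 0 1]
          · show P 0 1 = 0; nlinarith [hnonneg 0 0, hnonneg 0 1]
        simp [h0, h]
      · field_simp
    have hd : ∀ j, P 1 j = r1 * (if r1 = 0 then ![1, 0] else fun j => P 1 j / r1) j := by
      intro j
      split_ifs with h
      · have h0 : P 1 j = 0 := by
          fin_cases j
          · show P 1 0 = 0; nlinarith [hnonneg 1 0, hnonneg 1 1]
          · show P 1 1 = 0; nlinarith [hnonneg 1 0, hnonneg 1 1]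
        simp [h0, h]
      · field_simp
    have h1mr0 : 1 - r0 = r1 := by linarith
    intro i j
    fin_cases i
    · simpa using hb j
    · simp only [h1mr0]
      simpa using hd j
end
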